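/- Let κ > 0, u₀ > 0, a > 0, and let u solve u''/(1-u'²)^{3/2} = κu on [0,a] with u(0) = u₀, u'(0) = 0, u'(a) = tanh β with β > 0. Then u₀ - 1/(κu₀) + √(a² + 1/(κ²u₀²)) < u(a) < u₀ + a·(cosh β - 1)/sinh β. -/

import Mathlib

private lemma m_strict {x y : ℝ} (hx : 0 ≤ x) (hxy : x < y) :
    x / Real.sqrt (1 + x ^ 2) < y / Real.sqrt (1 + y ^ 2) := by
  have h1 : (0:ℝ) < 1 + x ^ 2 := by positivity
  have h2 : (0:ℝ) < 1 + y ^ 2 := by positivity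
  have sx := Real.sq_sqrt h1.le
  have sy := Real.sq_sqrt h2.le
  have sxp : 0 < Real.sqrt (1 + x ^ 2) := Real.sqrt_pos.2 h1
  have syp : 0 < Real.sqrt (1 + y ^ 2) := Real.sqrt_pos.2 h2
  have hy : 0 < y := lt_of_le_of_lt hx hxy
  rw [div_lt_div_iff₀ sxp syp]
  have key : (x * Real.sqrt (1 + y ^ 2)) ^ 2 < (y * Real.sqrt (1 + x ^ 2)) ^ 2 := by
    nlinarith [sx, sy, hx, hy, hxy, mul_pos hy hy]
  exact lt_of_pow_lt_pow_left₀ 2 (by positivity) key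

private lemma m_id {t : ℝ} (ht : |t| < 1) :
    (t / Real.sqrt (1 - t ^ 2)) / Real.sqrt (1 + (t / Real.sqrt (1 - t ^ 2)) ^ 2) = t := by
  have h1 : (0:ℝ) < 1 - t ^ 2 := by
    have := abs_lt.1 ht; nlinarith [this.1, this.2]
  have hsp : 0 < Real.sqrt (1 - t ^ 2) := Real.sqrt_pos.2 h1
  have hs2 := Real.sq_sqrt h1.le
  have key : 1 + (t / Real.sqrt (1 - t ^ 2)) ^ 2 = ((Real.sqrt (1 - t ^ 2))⁻¹) ^ 2 := by
    field_simp; linarith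
  rw [key, Real.sqrt_sq (by positivity)]
  field_simp

private lemma m_mu {r μ : ℝ} (hr : 0 ≤ r) (hμ : 0 < μ) :
    (r / μ) / Real.sqrt (1 + (r / μ) ^ 2) = r / Real.sqrt (r ^ 2 + μ ^ 2) := by
  have h1 : (0:ℝ) < r ^ 2 + μ ^ 2 := by positivity
  have hsp : 0 < Real.sqrt (r ^ 2 + μ ^ 2) := Real.sqrt_pos.2 h1
  have hs2 := Real.sq_sqrt h1.le
  have key : 1 + (r / μ) ^ 2 = (Real.sqrt (r ^ 2 + μ ^ 2) / μ) ^ 2 := by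
    field_simp
    rw [hs2]; ring
  rw [key, Real.sqrt_sq (by positivity)]
  field_simp

set_option maxHeartbeats 2000000 in
/-- Height estimates for sessile stationary bands. -/
theorem stmt_15 (κ u₀ a β : ℝ) (hκ : 0 < κ) (hu₀ : 0 < u₀) (ha : 0 < a) (hβ : 0 < β)
    (u u' u'' : ℝ → ℝ)
    (hu : ∀ r ∈ Set.Icc (0:ℝ) a, HasDerivAt u (u' r) r)
    (hu' : ∀ r ∈ Set.Icc (0:ℝ) a, HasDerivAt u' (u'' r) r)
    (hsp : ∀ r ∈ Set.Icc (0:ℝ) a, |u' r| < 1)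
    (hode : ∀ r ∈ Set.Icc (0:ℝ) a,
      u'' r = κ * u r * Real.sqrt (1 - u' r ^ 2) ^ 3)
    (hu0 : u 0 = u₀) (hu'0 : u' 0 = 0) (hu'a : u' a = Real.tanh β) :
    u₀ - 1 / (κ * u₀) + Real.sqrt (a ^ 2 + 1 / (κ ^ 2 * u₀ ^ 2)) < u a ∧
    u a < u₀ + a * (Real.cosh β - 1) / Real.sinh β := by
  have ha0 : (0:ℝ) ∈ Set.Icc (0:ℝ) a := ⟨le_refl 0, ha.le⟩
  have haI : a ∈ Set.Icc (0:ℝ) a := ⟨ha.le, le_refl a⟩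
  have pos1 : ∀ r ∈ Set.Icc (0:ℝ) a, 0 < 1 - u' r ^ 2 := by
    intro r hr
    have h := abs_lt.1 (hsp r hr)
    nlinarith [h.1, h.2]
  have sqp : ∀ r ∈ Set.Icc (0:ℝ) a, 0 < Real.sqrt (1 - u' r ^ 2) :=
    fun r hr => Real.sqrt_pos.2 (pos1 r hr)
  have sq2 : ∀ r ∈ Set.Icc (0:ℝ) a, Real.sqrt (1 - u' r ^ 2) ^ 2 = 1 - u' r ^ 2 :=
    fun r hr => Real.sq_sqrt (pos1 r hr).le
  -- derivative of the sqrt factor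
  have hds : ∀ r ∈ Set.Icc (0:ℝ) a, HasDerivAt (fun x => Real.sqrt (1 - u' x ^ 2))
      (-(2 * u' r * u'' r) / (2 * Real.sqrt (1 - u' r ^ 2))) r := by
    intro r hr
    have h1 : HasDerivAt (fun x => 1 - u' x ^ 2) (-(2 * u' r * u'' r)) r := by
      have h := (hasDerivAt_const r (1:ℝ)).sub ((hu' r hr).pow 2)
      refine h.congr_deriv (Eq.symm ?_)
      push_cast
      ring
    exact h1.sqrt (ne_of_gt (pos1 r hr))
  -- energy identity : (sqrt(1-u'^2))⁻¹ - κ u²/2 is constant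
  have hE : ∀ r ∈ Set.Icc (0:ℝ) a,
      HasDerivAt (fun x => (Real.sqrt (1 - u' x ^ 2))⁻¹ - κ * u x ^ 2 / 2) 0 r := by
    intro r hr
    have hs := sqp r hr
    have h3 := (hds r hr).inv (ne_of_gt hs)
    have h4 : HasDerivAt (fun x => κ * u x ^ 2 / 2) (κ * (2 * u r * u' r) / 2) r := by
      have h := (((hu r hr).pow 2).const_mul κ).div_const 2
      refine h.congr_deriv (Eq.symm ?_)
      push_cast
      ring
    have h5 := h3.sub h4
    refine h5.congr_deriv (Eq.symm ?_)
    rw [hode r hr]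
    have hs2 := sq2 r hr
    field_simp
    ring
  have henergy : ∀ r ∈ Set.Icc (0:ℝ) a,
      (Real.sqrt (1 - u' r ^ 2))⁻¹ - κ * u r ^ 2 / 2 = 1 - κ * u₀ ^ 2 / 2 := by
    have hc : ContinuousOn (fun x => (Real.sqrt (1 - u' x ^ 2))⁻¹ - κ * u x ^ 2 / 2)
        (Set.Icc (0:ℝ) a) := fun x hx => ((hE x hx).continuousAt).continuousWithinAt
    have hconst := constant_of_has_deriv_right_zero hc
      (fun x hx => ((hE x (Set.Ico_subset_Icc_self hx)).hasDerivWithinAt))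
    intro r hr
    have h := hconst r hr
    simpa [hu'0, hu0, Real.sqrt_one] using h
  have husq : ∀ r ∈ Set.Icc (0:ℝ) a, u₀ ^ 2 ≤ u r ^ 2 := by
    intro r hr
    have h := henergy r hr
    have hle1 : Real.sqrt (1 - u' r ^ 2) ≤ 1 := by
      exact Real.sqrt_le_one.2 (by nlinarith [sq_nonneg (u' r)])
    have hs := sqp r hr
    have hinv : 1 ≤ (Real.sqrt (1 - u' r ^ 2))⁻¹ := by
      have hmul := mul_inv_cancel₀ (ne_of_gt hs)
      have hip : 0 < (Real.sqrt (1 - u' r ^ 2))⁻¹ := inv_pos.2 hs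
      nlinarith [hmul, hip, hle1, hs]
    nlinarith [hκ]
  have hupos : ∀ r ∈ Set.Icc (0:ℝ) a, 0 < u r := by
    intro r hr
    by_contra hle
    push_neg at hle
    have hsub : Set.Icc (0:ℝ) r ⊆ Set.Icc (0:ℝ) a := Set.Icc_subset_Icc le_rfl hr.2
    have hcont : ContinuousOn u (Set.Icc (0:ℝ) r) :=
      fun x hx => ((hu x (hsub hx)).continuousAt).continuousWithinAt
    have h0 : (0:ℝ) ∈ Set.Icc (u r) (u 0) := ⟨hle, by rw [hu0]; exact hu₀.le⟩
    obtain ⟨c, hc, hc0⟩ := intermediate_value_Icc' hr.1 hcont h0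
    have := husq c (hsub hc)
    rw [hc0] at this
    nlinarith
  have huge : ∀ r ∈ Set.Icc (0:ℝ) a, u₀ ≤ u r := by
    intro r hr
    nlinarith [husq r hr, hupos r hr]
  -- the function φ = u' / sqrt(1-u'^2) with φ' = κ u
  set φ : ℝ → ℝ := fun r => u' r / Real.sqrt (1 - u' r ^ 2) with hφdef
  have hφd : ∀ r ∈ Set.Icc (0:ℝ) a, HasDerivAt φ (κ * u r) r := by
    intro r hr
    have hs := sqp r hr
    have hs2 := sq2 r hr
    have h := (hu' r hr).div (hds r hr) (ne_of_gt hs)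
    refine h.congr_deriv (Eq.symm ?_)
    rw [hode r hr]
    field_simp
    linear_combination (-(u r)) * hs2
  have hφcont : ContinuousOn φ (Set.Icc (0:ℝ) a) :=
    fun x hx => ((hφd x hx).continuousAt).continuousWithinAt
  have hφmono : StrictMonoOn φ (Set.Icc (0:ℝ) a) := by
    apply strictMonoOn_of_deriv_pos (convex_Icc 0 a) hφcont
    intro x hx
    rw [interior_Icc] at hx
    rw [(hφd x (Set.Ioo_subset_Icc_self hx)).deriv]
    exact mul_pos hκ (hupos x (Set.Ioo_subset_Icc_self hx))
  have hφ0 : φ 0 = 0 := by simp [hφdef, hu'0]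
  have hφpos : ∀ r ∈ Set.Icc (0:ℝ) a, 0 < r → 0 < φ r := by
    intro r hr hr0
    have := hφmono ha0 hr hr0
    rwa [hφ0] at this
  have hu'pos : ∀ r ∈ Set.Icc (0:ℝ) a, 0 < r → 0 < u' r := by
    intro r hr hr0
    have h := hφpos r hr hr0
    have hs := sqp r hr
    rcases div_pos_iff.1 h with ⟨h1, _⟩ | ⟨_, h2⟩
    · exact h1
    · linarith
  have hucont : ContinuousOn u (Set.Icc (0:ℝ) a) :=
    fun x hx => ((hu x hx).continuousAt).continuousWithinAt
  have humono : StrictMonoOn u (Set.Icc (0:ℝ) a) := by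
    apply strictMonoOn_of_deriv_pos (convex_Icc 0 a) hucont
    intro x hx
    rw [interior_Icc] at hx
    rw [(hu x (Set.Ioo_subset_Icc_self hx)).deriv]
    exact hu'pos x (Set.Ioo_subset_Icc_self hx) hx.1
  -- φ r > κ u₀ r on the interior
  have hφlb : ∀ x ∈ Set.Ioo (0:ℝ) a, κ * u₀ * x < φ x := by
    have hψd : ∀ r ∈ Set.Icc (0:ℝ) a,
        HasDerivAt (fun x => φ x - κ * u₀ * x) (κ * u r - κ * u₀) r := by
      intro r hr
      have h := (hφd r hr).sub ((hasDerivAt_id r).const_mul (κ * u₀))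
      refine h.congr_deriv (Eq.symm ?_)
      ring
    have hψmono : StrictMonoOn (fun x => φ x - κ * u₀ * x) (Set.Icc (0:ℝ) a) := by
      apply strictMonoOn_of_deriv_pos (convex_Icc 0 a)
        (fun x hx => ((hψd x hx).continuousAt).continuousWithinAt)
      intro x hx
      rw [interior_Icc] at hx
      rw [(hψd x (Set.Ioo_subset_Icc_self hx)).deriv]
      have h1 := humono ha0 (Set.Ioo_subset_Icc_self hx) hx.1
      rw [hu0] at h1
      nlinarith
    intro x hx
    have h := hψmono ha0 (Set.Ioo_subset_Icc_self hx) hx.1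
    simp only [hφ0, hu'0] at h
    have h0 : (0:ℝ) - κ * u₀ * 0 = 0 := by ring
    nlinarith [h]
  -- lower bound
  have hlow : u₀ - 1 / (κ * u₀) + Real.sqrt (a ^ 2 + 1 / (κ ^ 2 * u₀ ^ 2)) < u a := by
    set μ₁ : ℝ := 1 / (κ * u₀) with hμ₁def
    have hμ₁ : 0 < μ₁ := by positivity
    have hgd : ∀ r ∈ Set.Icc (0:ℝ) a, HasDerivAt
        (fun x => u x - Real.sqrt (x ^ 2 + μ₁ ^ 2))
        (u' r - r / Real.sqrt (r ^ 2 + μ₁ ^ 2)) r := by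
      intro r hr
      have hpos : (0:ℝ) < r ^ 2 + μ₁ ^ 2 := by positivity
      have h1 : HasDerivAt (fun x : ℝ => x ^ 2 + μ₁ ^ 2) (2 * r) r := by
        have h := (hasDerivAt_pow 2 r).add_const (μ₁ ^ 2)
        refine h.congr_deriv (Eq.symm ?_)
        push_cast
        ring
      have h2 := h1.sqrt (ne_of_gt hpos)
      have h3 := (hu r hr).sub h2
      refine h3.congr_deriv (Eq.symm ?_)
      have hsp2 : (0:ℝ) < Real.sqrt (r ^ 2 + μ₁ ^ 2) := Real.sqrt_pos.2 hpos
      field_simp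
    have hgmono : StrictMonoOn (fun x => u x - Real.sqrt (x ^ 2 + μ₁ ^ 2))
        (Set.Icc (0:ℝ) a) := by
      apply strictMonoOn_of_deriv_pos (convex_Icc 0 a)
        (fun x hx => ((hgd x hx).continuousAt).continuousWithinAt)
      intro x hx
      rw [interior_Icc] at hx
      rw [(hgd x (Set.Ioo_subset_Icc_self hx)).deriv]
      have hxI := Set.Ioo_subset_Icc_self hx
      -- u' x > x / sqrt(x^2+μ₁^2)
      have e1 : u' x = φ x / Real.sqrt (1 + φ x ^ 2) := (m_id (hsp x hxI)).symm
      have e2 : x / Real.sqrt (x ^ 2 + μ₁ ^ 2)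
          = (x / μ₁) / Real.sqrt (1 + (x / μ₁) ^ 2) := (m_mu hx.1.le hμ₁).symm
      have e3 : x / μ₁ = κ * u₀ * x := by
        rw [hμ₁def]
        field_simp
      have hlt : x / μ₁ < φ x := by rw [e3]; exact hφlb x hx
      have hnn : 0 ≤ x / μ₁ := div_nonneg hx.1.le hμ₁.le
      have := m_strict hnn hlt
      rw [e1, e2]
      linarith
    have hfin := hgmono ha0 haI ha
    simp only [hu0] at hfin
    have h0 : Real.sqrt ((0:ℝ) ^ 2 + μ₁ ^ 2) = μ₁ := by
      rw [show (0:ℝ) ^ 2 + μ₁ ^ 2 = μ₁ ^ 2 by ring, Real.sqrt_sq hμ₁.le]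
    rw [h0] at hfin
    have hμsq : μ₁ ^ 2 = 1 / (κ ^ 2 * u₀ ^ 2) := by
      rw [hμ₁def]
      field_simp
    rw [← hμsq]
    linarith
  refine ⟨hlow, ?_⟩
  -- upper bound
  have hsh : 0 < Real.sinh β := Real.sinh_pos_iff.2 hβ
  have hch : 0 < Real.cosh β := Real.cosh_pos β
  have hφa : φ a = Real.sinh β := by
    have h1 : 1 - u' a ^ 2 = ((Real.cosh β)⁻¹) ^ 2 := by
      rw [hu'a, Real.tanh_eq_sinh_div_cosh]
      have hc2 := Real.cosh_sq β
      field_simp; linarith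
    simp only [hφdef]
    rw [h1, Real.sqrt_sq (by positivity), hu'a, Real.tanh_eq_sinh_div_cosh]
    field_simp
  -- φ x < sinh β / a * x on the interior (by convexity of φ)
  have hφub : ∀ x ∈ Set.Ioo (0:ℝ) a, φ x < Real.sinh β / a * x := by
    intro x hx
    by_contra hcon
    push_neg at hcon
    have hsub1 : Set.Icc (0:ℝ) x ⊆ Set.Icc (0:ℝ) a := Set.Icc_subset_Icc le_rfl hx.2.le
    have hsub2 : Set.Icc x a ⊆ Set.Icc (0:ℝ) a := Set.Icc_subset_Icc hx.1.le le_rfl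
    obtain ⟨c₁, hc₁, hc₁v⟩ := exists_hasDerivAt_eq_slope φ (fun y => κ * u y) hx.1
      (hφcont.mono hsub1)
      (fun y hy => hφd y (hsub1 (Set.Ioo_subset_Icc_self hy)))
    obtain ⟨c₂, hc₂, hc₂v⟩ := exists_hasDerivAt_eq_slope φ (fun y => κ * u y) hx.2
      (hφcont.mono hsub2)
      (fun y hy => hφd y (hsub2 (Set.Ioo_subset_Icc_self hy)))
    rw [hφ0] at hc₁v
    rw [hφa] at hc₂v
    have hcon' : Real.sinh β * x ≤ φ x * a := by
      rw [div_mul_eq_mul_div, div_le_iff₀ ha] at hcon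
      linarith
    have hm : u c₁ < u c₂ := by
      apply humono (hsub1 (Set.Ioo_subset_Icc_self hc₁)) (hsub2 (Set.Ioo_subset_Icc_self hc₂))
      linarith [hc₁.2, hc₂.1]
    -- κ u c₁ = φ x / x ≥ sinh β / a
    have h1 : Real.sinh β / a ≤ κ * u c₁ := by
      rw [hc₁v]
      rw [div_le_div_iff₀ ha (by linarith [hx.1])]
      linarith
    -- κ u c₂ = (sinh β - φ x)/(a - x) ≤ sinh β / a
    have h2 : κ * u c₂ ≤ Real.sinh β / a := by
      rw [hc₂v]
      rw [div_le_div_iff₀ (by linarith [hx.2]) ha]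
      nlinarith [hcon']
    nlinarith [h1, h2, hm, hκ]
  set μ₂ : ℝ := a / Real.sinh β with hμ₂def
  have hμ₂ : 0 < μ₂ := by positivity
  have hhd : ∀ r ∈ Set.Icc (0:ℝ) a, HasDerivAt
      (fun x => Real.sqrt (x ^ 2 + μ₂ ^ 2) - u x)
      (r / Real.sqrt (r ^ 2 + μ₂ ^ 2) - u' r) r := by
    intro r hr
    have hpos : (0:ℝ) < r ^ 2 + μ₂ ^ 2 := by positivity
    have h1 : HasDerivAt (fun x : ℝ => x ^ 2 + μ₂ ^ 2) (2 * r) r := by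
      have h := (hasDerivAt_pow 2 r).add_const (μ₂ ^ 2)
      refine h.congr_deriv (Eq.symm ?_)
      push_cast
      ring
    have h2 := h1.sqrt (ne_of_gt hpos)
    have h3 := h2.sub (hu r hr)
    refine h3.congr_deriv (Eq.symm ?_)
    have hsp2 : (0:ℝ) < Real.sqrt (r ^ 2 + μ₂ ^ 2) := Real.sqrt_pos.2 hpos
    field_simp
  have hhmono : StrictMonoOn (fun x => Real.sqrt (x ^ 2 + μ₂ ^ 2) - u x)
      (Set.Icc (0:ℝ) a) := by
    apply strictMonoOn_of_deriv_pos (convex_Icc 0 a)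
      (fun x hx => ((hhd x hx).continuousAt).continuousWithinAt)
    intro x hx
    rw [interior_Icc] at hx
    rw [(hhd x (Set.Ioo_subset_Icc_self hx)).deriv]
    have hxI := Set.Ioo_subset_Icc_self hx
    have e1 : u' x = φ x / Real.sqrt (1 + φ x ^ 2) := (m_id (hsp x hxI)).symm
    have e2 : x / Real.sqrt (x ^ 2 + μ₂ ^ 2)
        = (x / μ₂) / Real.sqrt (1 + (x / μ₂) ^ 2) := (m_mu hx.1.le hμ₂).symm
    have e3 : x / μ₂ = Real.sinh β / a * x := by
      rw [hμ₂def]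
      field_simp
    have hlt : φ x < x / μ₂ := by rw [e3]; exact hφub x hx
    have hnn : 0 ≤ φ x := (hφpos x hxI hx.1).le
    have := m_strict hnn hlt
    rw [e1, e2]
    linarith
  have hfin := hhmono ha0 haI ha
  simp only [hu0] at hfin
  have h0 : Real.sqrt ((0:ℝ) ^ 2 + μ₂ ^ 2) = μ₂ := by
    rw [show (0:ℝ) ^ 2 + μ₂ ^ 2 = μ₂ ^ 2 by ring, Real.sqrt_sq hμ₂.le]
  rw [h0] at hfin
  have hsq : Real.sqrt (a ^ 2 + μ₂ ^ 2) = a * Real.cosh β / Real.sinh β := by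
    have h1 : a ^ 2 + μ₂ ^ 2 = (a * Real.cosh β / Real.sinh β) ^ 2 := by
      rw [hμ₂def]
      have hc2 := Real.cosh_sq β
      field_simp
      linear_combination (-1) * hc2
    rw [h1, Real.sqrt_sq (by positivity)]
  rw [hsq] at hfin
  have hfinal : u₀ + a * (Real.cosh β - 1) / Real.sinh β
      = u₀ - μ₂ + a * Real.cosh β / Real.sinh β := by
    rw [hμ₂def]
    field_simp
    ring
  rw [hfinal]
  linarith
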